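/- arXiv:1905.07559 — 5 statements merged into one kernel-verified Lean document; each statement's English description precedes it below -/
import Mathlib

section
/- Hierarchical padded partition families yield tree covers: Let (X,d) be a finite metric space admitting an (η,μ)-hierarchical partition family of size k, with 0 < η < 1 < μ. Then X admits a tree cover of size k with distortion μ/η. -/
/-- A finite metric is a tree metric iff it satisfies the four-point condition. -/
def IsTreeMetric {Y : Type*} (ρ : Y → Y → ℝ) : Prop :=
  (∀ x, ρ x x = 0) ∧ (∀ x y, ρ x y = ρ y x) ∧ (∀ x y, x ≠ y → 0 < ρ x y) ∧
  (∀ x y z, ρ x z ≤ ρ x y + ρ y z) ∧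
  (∀ x y z w, ρ x y + ρ z w ≤ max (ρ x z + ρ y w) (ρ x w + ρ y z))

private lemma ultra_key {Y : Type*} (u : Y → Y → ℝ)
    (hsymm : ∀ a b, u a b = u b a)
    (hU : ∀ a b c, u a c ≤ max (u a b) (u b c))
    (x y z w : Y) (h1 : u y w ≤ u x z) (h2 : u x w ≤ u x z) (h3 : u y z ≤ u x z) :
    u x y + u z w ≤ max (u x z + u y w) (u x w + u y z) := by
  have hxy : u x y ≤ u x z := by
    have h := hU x z y
    rw [hsymm z y] at h
    exact h.trans (max_le le_rfl h3)
  have hzw : u z w ≤ max (u y z) (u y w) := by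
    have h := hU z y w
    rw [hsymm z y] at h
    exact h
  rcases le_total (u y z) (u y w) with h4 | h4
  · have hz : u z w ≤ u y w := hzw.trans (max_le h4 le_rfl)
    exact le_max_of_le_left (by linarith)
  · have hzw' : u z w ≤ u y z := hzw.trans (max_le le_rfl h4)
    have hxy2 : u x y ≤ max (u x w) (u y w) := by
      have h := hU x w y
      rw [hsymm w y] at h
      exact h
    rcases le_total (u x w) (u y w) with h5 | h5
    · have hx : u x y ≤ u y w := hxy2.trans (max_le h5 le_rfl)
      exact le_max_of_le_left (by linarith)
    · have hx : u x y ≤ u x w := hxy2.trans (max_le le_rfl h5)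
      exact le_max_of_le_right (by linarith)

private lemma ultra_four {Y : Type*} (u : Y → Y → ℝ)
    (hsymm : ∀ a b, u a b = u b a)
    (hU : ∀ a b c, u a c ≤ max (u a b) (u b c)) (x y z w : Y) :
    u x y + u z w ≤ max (u x z + u y w) (u x w + u y z) := by
  -- case on which of the four cross-distances is maximal
  rcases le_total (u x z) (u y w) with h1 | h1
  · rcases le_total (u y w) (u x w) with h2 | h2
    · rcases le_total (u x w) (u y z) with h3 | h3
      · -- u y z maximal
        have h := ultra_key u hsymm hU y x z w h3 (h2.trans h3) ((h1.trans h2).trans h3)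
        rw [hsymm y x, max_comm, add_comm (u y w) (u x z), add_comm (u y z) (u x w)] at h
        exact h
      · -- u x w maximal
        have h := ultra_key u hsymm hU x y w z h3 (h1.trans h2) h2
        rw [hsymm w z, max_comm] at h
        exact h
    · rcases le_total (u y w) (u y z) with h3 | h3
      · -- u y z maximal
        have h := ultra_key u hsymm hU y x z w (h2.trans h3) h3 (h1.trans h3)
        rw [hsymm y x, max_comm, add_comm (u y w) (u x z), add_comm (u y z) (u x w)] at h
        exact h
      · -- u y w maximal
        have h := ultra_key u hsymm hU y x w z h1 h3 h2
        rw [hsymm y x, hsymm w z, add_comm (u y w) (u x z), add_comm (u y z) (u x w)] at h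
        exact h
  · rcases le_total (u x z) (u x w) with h2 | h2
    · rcases le_total (u x w) (u y z) with h3 | h3
      · -- u y z maximal
        have h := ultra_key u hsymm hU y x z w h3 ((h1.trans h2).trans h3) (h2.trans h3)
        rw [hsymm y x, max_comm, add_comm (u y w) (u x z), add_comm (u y z) (u x w)] at h
        exact h
      · -- u x w maximal
        have h := ultra_key u hsymm hU x y w z h3 h2 (h1.trans h2)
        rw [hsymm w z, max_comm] at h
        exact h
    · rcases le_total (u x z) (u y z) with h3 | h3
      · -- u y z maximal
        have h := ultra_key u hsymm hU y x z w (h2.trans h3) (h1.trans h3) h3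
        rw [hsymm y x, max_comm, add_comm (u y w) (u x z), add_comm (u y z) (u x w)] at h
        exact h
      · -- u x z maximal
        exact ultra_key u hsymm hU x y z w h1 h2 h3

/-- An `(η,μ)`-hierarchical partition family of size `k` (modelled as `k`
hierarchies of equivalence relations: `Δ_i`-bounded, refining, with the padding
property at all scales) yields a tree cover of size `k` with distortion `μ/η`. -/
theorem stmt_6 {X : Type*} [MetricSpace X] [Fintype X] [Nontrivial X]
    (η μ : ℝ) (hη0 : 0 < η) (hη1 : η < 1) (hμ : 1 < μ)
    (k B : ℕ) (Δ : ℕ → ℝ)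
    (hΔ : ∀ i, Δ i = Metric.diam (Set.univ : Set X) / μ ^ i)
    (hB : ∀ x y : X, x ≠ y → Δ B ≤ dist x y)
    (E : Fin k → ℕ → X → X → Prop)
    (hequiv : ∀ j i, Equivalence (E j i))
    (hbdd : ∀ j i, i ≤ B → ∀ x y : X, E j i x y → dist x y ≤ Δ i)
    (href : ∀ j i, i + 1 ≤ B → ∀ x y : X, E j (i + 1) x y → E j i x y)
    (hpad : ∀ (x : X) (i : ℕ), i ≤ B → ∃ j, ∀ y : X, dist x y ≤ η * Δ i → E j i x y) :
    ∃ ρ : Fin k → X → X → ℝ,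
      (∀ j, IsTreeMetric (ρ j)) ∧
      (∀ j (x y : X), dist x y ≤ ρ j x y) ∧
      (∀ x y : X, x ≠ y → ∃ j, ρ j x y ≤ (μ / η) * dist x y) := by
  classical
  obtain ⟨x₀, y₀, hxy₀⟩ := exists_pair_ne X
  have hbound : Bornology.IsBounded (Set.univ : Set X) := Set.finite_univ.isBounded
  have hDpos : 0 < Metric.diam (Set.univ : Set X) := by
    have h1 := Metric.dist_le_diam_of_mem hbound (Set.mem_univ x₀) (Set.mem_univ y₀)
    have h2 : 0 < dist x₀ y₀ := dist_pos.mpr hxy₀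
    linarith
  have hμ0 : (0:ℝ) < μ := lt_trans one_pos hμ
  have hΔpos : ∀ i, 0 < Δ i := fun i => by rw [hΔ]; positivity
  have hΔanti : ∀ a b : ℕ, a ≤ b → Δ b ≤ Δ a := by
    intro a b hab
    rw [hΔ, hΔ]
    apply div_le_div_of_nonneg_left hDpos.le (by positivity)
    exact pow_le_pow_right₀ hμ.le hab
  -- downward closedness of the hierarchies
  have hdown0 : ∀ j (x y : X) (m a : ℕ), a + m ≤ B → E j (a + m) x y → E j a x y := by
    intro j x y m
    induction m with
    | zero => intro a _ h; simpa using h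
    | succ n ih =>
      intro a hle h
      have h' : E j (a + n) x y := href j (a + n) (by omega) x y h
      exact ih a (by omega) h'
  have hdown : ∀ j (a b : ℕ), a ≤ b → b ≤ B → ∀ x y : X, E j b x y → E j a x y := by
    intro j a b hab hbB x y h
    obtain ⟨m, rfl⟩ := Nat.exists_eq_add_of_le hab
    exact hdown0 j x y m a (by omega) h
  -- the level of separation
  set ℓ : Fin k → X → X → ℕ := fun j x y => Nat.findGreatest (fun i => E j i x y) B with hℓdef
  have hℓle : ∀ j (x y : X), ℓ j x y ≤ B := fun j x y => Nat.findGreatest_le B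
  have hℓspec : ∀ j (x y : X), 0 < ℓ j x y → E j (ℓ j x y) x y := by
    intro j x y hpos
    have hne : ℓ j x y ≠ 0 := hpos.ne'
    simp only [hℓdef] at hne ⊢
    have := (not_iff_not.mpr (Nat.findGreatest_eq_zero_iff (P := fun i => E j i x y))).mp hne
    push_neg at this
    obtain ⟨m, hm0, hmB, hPm⟩ := this
    exact Nat.findGreatest_spec (P := fun i => E j i x y) hmB hPm
  have hℓsymm : ∀ j (x y : X), ℓ j x y = ℓ j y x := by
    have key : ∀ j (x y : X), ℓ j x y ≤ ℓ j y x := by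
      intro j x y
      rcases Nat.eq_zero_or_pos (ℓ j x y) with h0 | hpos
      · omega
      · exact Nat.le_findGreatest (hℓle j x y) ((hequiv j _).symm (hℓspec j x y hpos))
    intro j x y
    exact le_antisymm (key j x y) (key j y x)
  have hℓmin : ∀ j (x y z : X), min (ℓ j x y) (ℓ j y z) ≤ ℓ j x z := by
    intro j x y z
    set m := min (ℓ j x y) (ℓ j y z) with hm
    rcases Nat.eq_zero_or_pos m with h0 | hpos
    · omega
    · have h1 : E j (ℓ j x y) x y := hℓspec j x y (lt_of_lt_of_le hpos (min_le_left _ _))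
      have h2 : E j (ℓ j y z) y z := hℓspec j y z (lt_of_lt_of_le hpos (min_le_right _ _))
      have e1 : E j m x y := hdown j m _ (min_le_left _ _) (hℓle j x y) x y h1
      have e2 : E j m y z := hdown j m _ (min_le_right _ _) (hℓle j y z) y z h2
      exact Nat.le_findGreatest (le_trans (min_le_left _ _) (hℓle j x y))
        ((hequiv j m).trans e1 e2)
  -- the tree metrics
  set ρ : Fin k → X → X → ℝ := fun j x y => if x = y then 0 else Δ (ℓ j x y) with hρdef
  have hρnonneg : ∀ j (x y : X), 0 ≤ ρ j x y := by
    intro j x y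
    rw [hρdef]
    dsimp only
    split
    · exact le_refl 0
    · exact (hΔpos _).le
  have hρsymm : ∀ j (x y : X), ρ j x y = ρ j y x := by
    intro j x y
    rw [hρdef]
    dsimp only
    by_cases h : x = y
    · rw [if_pos h, if_pos h.symm]
    · rw [if_neg h, if_neg (Ne.symm h), hℓsymm]
  have hρultra : ∀ j (x y z : X), ρ j x z ≤ max (ρ j x y) (ρ j y z) := by
    intro j x y z
    by_cases hxz : x = z
    · have : ρ j x z = 0 := by rw [hρdef]; exact if_pos hxz
      rw [this]
      exact le_max_of_le_left (hρnonneg j x y)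
    by_cases hxy : x = y
    · subst hxy
      exact le_max_of_le_right le_rfl
    by_cases hyz : y = z
    · subst hyz
      exact le_max_of_le_left le_rfl
    have e1 : ρ j x z = Δ (ℓ j x z) := by rw [hρdef]; exact if_neg hxz
    have e2 : ρ j x y = Δ (ℓ j x y) := by rw [hρdef]; exact if_neg hxy
    have e3 : ρ j y z = Δ (ℓ j y z) := by rw [hρdef]; exact if_neg hyz
    rw [e1, e2, e3]
    have hmin := hℓmin j x y z
    have hstep : Δ (ℓ j x z) ≤ Δ (min (ℓ j x y) (ℓ j y z)) := hΔanti _ _ hmin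
    rcases min_cases (ℓ j x y) (ℓ j y z) with ⟨he, _⟩ | ⟨he, _⟩
    · rw [he] at hstep; exact le_max_of_le_left hstep
    · rw [he] at hstep; exact le_max_of_le_right hstep
  have hρdom : ∀ j (x y : X), dist x y ≤ ρ j x y := by
    intro j x y
    by_cases hxy : x = y
    · subst hxy; simp [hρdef]
    have e : ρ j x y = Δ (ℓ j x y) := by rw [hρdef]; exact if_neg hxy
    rw [e]
    rcases Nat.eq_zero_or_pos (ℓ j x y) with h0 | hpos
    · rw [h0, hΔ, pow_zero, div_one]
      exact Metric.dist_le_diam_of_mem hbound (Set.mem_univ x) (Set.mem_univ y)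
    · exact hbdd j _ (hℓle j x y) x y (hℓspec j x y hpos)
  refine ⟨ρ, ?_, hρdom, ?_⟩
  · -- tree metric
    intro j
    refine ⟨fun x => by rw [hρdef]; exact if_pos rfl, hρsymm j, ?_, ?_, ?_⟩
    · intro x y hxy
      have e : ρ j x y = Δ (ℓ j x y) := by rw [hρdef]; exact if_neg hxy
      rw [e]; exact hΔpos _
    · intro x y z
      exact (hρultra j x y z).trans
        (max_le (le_add_of_nonneg_right (hρnonneg j y z))
          (le_add_of_nonneg_left (hρnonneg j x y)))
    · exact ultra_four (ρ j) (hρsymm j) (hρultra j)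
  · -- distortion
    intro x y hxy
    have hdpos : 0 < dist x y := dist_pos.mpr hxy
    have hρle : ∀ j i, i ≤ B → E j i x y → ρ j x y ≤ Δ i := by
      intro j i hiB hE
      have e : ρ j x y = Δ (ℓ j x y) := by rw [hρdef]; exact if_neg hxy
      rw [e]
      exact hΔanti i _ (Nat.le_findGreatest hiB hE)
    by_cases h0 : dist x y ≤ η * Δ 0
    · -- take the greatest padded scale
      set i := Nat.findGreatest (fun m => dist x y ≤ η * Δ m) B with hidef
      have hiB : i ≤ B := Nat.findGreatest_le B
      have hPi : dist x y ≤ η * Δ i := Nat.findGreatest_spec (P := fun m => dist x y ≤ η * Δ m) (Nat.zero_le B) h0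
      have hPB : ¬ (dist x y ≤ η * Δ B) := by
        have h1 := hB x y hxy
        have h2 : η * Δ B < Δ B := by nlinarith [hΔpos B]
        intro hc; linarith
      have hiltB : i < B := lt_of_le_of_ne hiB (by intro h; exact hPB (h ▸ hPi))
      have hfail : ¬ (dist x y ≤ η * Δ (i + 1)) :=
        Nat.findGreatest_is_greatest (P := fun m => dist x y ≤ η * Δ m) (n := B) (by omega) (by omega)
      push_neg at hfail
      obtain ⟨j, hj⟩ := hpad x i hiB
      refine ⟨j, ?_⟩
      have h1 : ρ j x y ≤ Δ i := hρle j i hiB (hj y hPi)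
      have hΔstep : Δ i = μ * Δ (i + 1) := by
        rw [hΔ, hΔ, pow_succ]
        field_simp
      have h2 : μ * Δ (i + 1) ≤ (μ / η) * dist x y := by
        rw [div_mul_eq_mul_div, le_div_iff₀ hη0]
        nlinarith [hΔpos (i + 1)]
      linarith [hΔstep ▸ h1]
    · -- distance larger than the top padded scale
      push_neg at h0
      obtain ⟨j, hj⟩ := hpad x 0 (Nat.zero_le B)
      refine ⟨j, ?_⟩
      have e : ρ j x y = Δ (ℓ j x y) := by rw [hρdef]; exact if_neg hxy
      have h1 : ρ j x y ≤ Δ 0 := by rw [e]; exact hΔanti 0 _ (Nat.zero_le _)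
      have h2 : Δ 0 ≤ (μ / η) * dist x y := by
        rw [div_mul_eq_mul_div, le_div_iff₀ hη0]
        nlinarith [hΔpos 0]
      linarith
end

section
/- The β-composition of two metric spaces is a metric space: Let (S,d_S) and (T,d_T) be finite metric spaces with at least two points, let γ = max_{t≠t'} d_T(t,t') / min_{s≠s'} d_S(s,s'), and let β ≥ 1/2. Define Z = S × T with d_Z((u,t),(v,t')) = (1/(βγ))·d_T(t,t') if u = v, and d_Z((u,t),(v,t')) = d_S(u,v) if u ≠ v. Then d_Z is a metric on Z. -/
/-- The `β`-composition of two finite metric spaces is a metric space: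
with `γ = max_{t≠t'} d_T(t,t') / min_{s≠s'} d_S(s,s')` and `β ≥ 1/2`, the
function `d_Z` on `S × T` given by `(1/(βγ))·d_T` within a copy and `d_S`
between copies is a metric. -/
theorem stmt_7 {S T : Type*} [MetricSpace S] [MetricSpace T] [Fintype S] [Fintype T]
    [DecidableEq S] [Nontrivial S] [Nontrivial T] (β γ : ℝ) (hβ : 1 / 2 ≤ β)
    (hγ : γ = (sSup {d : ℝ | ∃ t t' : T, d = dist t t'}) /
        (sInf {d : ℝ | ∃ s s' : S, s ≠ s' ∧ d = dist s s'}))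
    (dZ : S × T → S × T → ℝ)
    (hdZ : ∀ p q : S × T,
      dZ p q = if p.1 = q.1 then (1 / (β * γ)) * dist p.2 q.2 else dist p.1 q.1) :
    (∀ p, dZ p p = 0) ∧ (∀ p q, p ≠ q → 0 < dZ p q) ∧
    (∀ p q, dZ p q = dZ q p) ∧
    (∀ p q r, dZ p r ≤ dZ p q + dZ q r) := by
  obtain ⟨s₀, s₁, hs⟩ := exists_pair_ne S
  obtain ⟨t₀, t₁, ht⟩ := exists_pair_ne T
  set A : Set ℝ := {d : ℝ | ∃ s s' : S, s ≠ s' ∧ d = dist s s'} with hA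
  set B : Set ℝ := {d : ℝ | ∃ t t' : T, d = dist t t'} with hB
  have hAfin : A.Finite :=
    Set.Finite.subset (Set.finite_range (fun p : S × S => dist p.1 p.2))
      (by rintro d ⟨s, s', _, rfl⟩; exact ⟨(s, s'), rfl⟩)
  have hBfin : B.Finite :=
    Set.Finite.subset (Set.finite_range (fun p : T × T => dist p.1 p.2))
      (by rintro d ⟨t, t', rfl⟩; exact ⟨(t, t'), rfl⟩)
  have hAne : A.Nonempty := ⟨dist s₀ s₁, s₀, s₁, hs, rfl⟩
  have hBne : B.Nonempty := ⟨dist t₀ t₁, t₀, t₁, rfl⟩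
  set m := sInf A with hm
  set M := sSup B with hM
  have hm_le : ∀ s s' : S, s ≠ s' → m ≤ dist s s' := fun s s' h =>
    csInf_le hAfin.bddBelow ⟨s, s', h, rfl⟩
  have hm_pos : 0 < m := by
    obtain ⟨s, s', h, hd⟩ := hAne.csInf_mem hAfin
    rw [← hm] at hd
    rw [hd]
    exact dist_pos.mpr h
  have hM_ge : ∀ t t' : T, dist t t' ≤ M := fun t t' =>
    le_csSup hBfin.bddAbove ⟨t, t', rfl⟩
  have hM_pos : 0 < M := lt_of_lt_of_le (dist_pos.mpr ht) (hM_ge t₀ t₁)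
  have hβ_pos : 0 < β := lt_of_lt_of_le (by norm_num) hβ
  have hγ' : γ = M / m := hγ
  have hγ_pos : 0 < γ := hγ' ▸ div_pos hM_pos hm_pos
  have hc_pos : 0 < 1 / (β * γ) := by positivity
  have key : ∀ t t' : T, (1 / (β * γ)) * dist t t' ≤ 2 * m := by
    intro t t'
    have h1 : 1 / (β * γ) = m / (β * M) := by
      rw [hγ']; field_simp
    rw [h1]
    calc m / (β * M) * dist t t' ≤ m / (β * M) * M :=
          mul_le_mul_of_nonneg_left (hM_ge t t') (by positivity)
      _ = m / β := by field_simp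
      _ ≤ 2 * m := by
          rw [div_le_iff₀ hβ_pos]
          nlinarith
  refine ⟨?_, ?_, ?_, ?_⟩
  · intro p; rw [hdZ]; simp
  · intro p q hpq
    rw [hdZ]
    by_cases h : p.1 = q.1
    · have h2 : p.2 ≠ q.2 := fun h2 => hpq (Prod.ext h h2)
      simp only [h, if_true]
      exact mul_pos hc_pos (dist_pos.mpr h2)
    · simp only [h, if_false]
      exact dist_pos.mpr h
  · intro p q
    rw [hdZ, hdZ]
    by_cases h : p.1 = q.1
    · rw [if_pos h, if_pos h.symm, dist_comm p.2]
    · rw [if_neg h, if_neg (fun h' => h h'.symm), dist_comm p.1]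
  · intro p q r
    rw [hdZ, hdZ, hdZ]
    by_cases h1 : p.1 = q.1 <;> by_cases h2 : q.1 = r.1
    · rw [if_pos h1, if_pos h2, if_pos (h1.trans h2)]
      have := dist_triangle p.2 q.2 r.2
      nlinarith [hc_pos.le]
    · rw [if_pos h1, if_neg h2, if_neg (fun h3 : p.1 = r.1 => h2 (h1.symm.trans h3))]
      have hnn : (0:ℝ) ≤ 1 / (β * γ) * dist p.2 q.2 := by positivity
      rw [h1]; linarith
    · rw [if_neg h1, if_pos h2, if_neg (fun h3 : p.1 = r.1 => h1 (h3.trans h2.symm))]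
      have hnn : (0:ℝ) ≤ 1 / (β * γ) * dist q.2 r.2 := by positivity
      rw [h2]; linarith
    · by_cases h3 : p.1 = r.1
      · rw [if_neg h1, if_neg h2, if_pos h3]
        calc 1 / (β * γ) * dist p.2 r.2 ≤ 2 * m := key _ _
          _ ≤ dist p.1 q.1 + dist q.1 r.1 := by
              have := hm_le _ _ h1
              have := hm_le _ _ h2
              linarith
      · rw [if_neg h1, if_neg h2, if_neg h3]
        exact dist_triangle _ _ _
end

section
/- Lower bound for Ramsey tree covers of composed cycles: fix N ≥ 3 and suppose every embedding of the N-point cycle metric C_N into any tree metric requires distortion at least N/3 − 1. Then for every k ≥ 1, any Ramsey tree cover of the k-fold self-composition Z_k(N) = [C_N]_β^k (for any fixed β ≥ 1/2) with k trees has distortion at least N/3 − 1 = (1/3)·|Z_k(N)|^{1/k} − 1. -/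
/-- The shortest path metric of the unweighted `N`-cycle. -/
noncomputable def cycleDist (N : ℕ) (i j : Fin N) : ℝ :=
  ((min (((i : ℤ) - (j : ℤ)).natAbs) (N - (((i : ℤ) - (j : ℤ)).natAbs)) : ℕ) : ℝ)

/-- The metric of the `k`-fold `β`-self-composition `Z_k(N) = [C_N]_β^k`, on
points `Fin k → Fin N` (coordinate `0` being the outermost cycle coordinate):
points agreeing in the outer coordinate are at distance `(1/(βγ))` times their
`Z_{k-1}` distance, where `γ = diam(Z_{k-1}) / min-distance(C_N)`, and otherwise
at the cycle distance of their outer coordinates. -/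
noncomputable def Zdist (N : ℕ) (β : ℝ) : (k : ℕ) → (Fin k → Fin N) → (Fin k → Fin N) → ℝ
  | 0, _, _ => 0
  | (k + 1), f, g =>
    let γ : ℝ := (sSup {d : ℝ | ∃ x y : Fin k → Fin N, d = Zdist N β k x y}) /
      (sInf {d : ℝ | ∃ i j : Fin N, i ≠ j ∧ d = cycleDist N i j})
    if f 0 = g 0 then
      (1 / (β * γ)) * Zdist N β k (fun i => f i.succ) (fun i => g i.succ)
    else cycleDist N (f 0) (g 0)

lemma cycleDist_self (N : ℕ) (i : Fin N) : cycleDist N i i = 0 := by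
  simp [cycleDist]

lemma cycleDist_nonneg (N : ℕ) (i j : Fin N) : 0 ≤ cycleDist N i j :=
  Nat.cast_nonneg _

lemma cycleDist_le_N (N : ℕ) (i j : Fin N) : cycleDist N i j ≤ N := by
  unfold cycleDist
  have h : min (((i : ℤ) - (j : ℤ)).natAbs) (N - (((i : ℤ) - (j : ℤ)).natAbs)) ≤ N := by omega
  exact_mod_cast h

lemma one_le_cycleDist {N : ℕ} {i j : Fin N} (h : i ≠ j) : 1 ≤ cycleDist N i j := by
  have hi : (i : ℤ) < N := by exact_mod_cast i.isLt
  have hj : (j : ℤ) < N := by exact_mod_cast j.isLt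
  have hi0 : (0 : ℤ) ≤ i := by positivity
  have hj0 : (0 : ℤ) ≤ j := by positivity
  have hij : (i : ℤ) ≠ (j : ℤ) := by
    simpa [Fin.ext_iff] using h
  unfold cycleDist
  have h1 : 1 ≤ min (((i : ℤ) - (j : ℤ)).natAbs) (N - (((i : ℤ) - (j : ℤ)).natAbs)) := by
    omega
  exact_mod_cast h1

lemma Zdist_self (N : ℕ) (β : ℝ) : ∀ k (x : Fin k → Fin N), Zdist N β k x x = 0 := by
  intro k
  induction k with
  | zero => intro x; rfl
  | succ k ih => intro x; simp [Zdist, ih]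

lemma sInf_cycle {N : ℕ} (hN : 3 ≤ N) :
    sInf {d : ℝ | ∃ i j : Fin N, i ≠ j ∧ d = cycleDist N i j} = 1 := by
  have i0 : Fin N := ⟨0, by omega⟩
  have i1 : Fin N := ⟨1, by omega⟩
  have hmem : (1 : ℝ) ∈ {d : ℝ | ∃ i j : Fin N, i ≠ j ∧ d = cycleDist N i j} := by
    refine ⟨⟨0, by omega⟩, ⟨1, by omega⟩, by simp [Fin.ext_iff], ?_⟩
    unfold cycleDist
    have : min ((((0:ℕ) : ℤ) - ((1:ℕ) : ℤ)).natAbs) (N - ((((0:ℕ):ℤ) - ((1:ℕ):ℤ)).natAbs)) = 1 := by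
      simp; omega
    norm_num
    omega
  apply le_antisymm
  · exact csInf_le ⟨1, by rintro d ⟨i, j, hij, rfl⟩; exact one_le_cycleDist hij⟩ hmem
  · exact le_csInf ⟨1, hmem⟩ (by rintro d ⟨i, j, hij, rfl⟩; exact one_le_cycleDist hij)

noncomputable def Zsup (N : ℕ) (β : ℝ) (k : ℕ) : ℝ :=
  sSup {d : ℝ | ∃ x y : Fin k → Fin N, d = Zdist N β k x y}

lemma Zdist_props {N : ℕ} (hN : 3 ≤ N) {β : ℝ} (hβ : 1 / 2 ≤ β) :
    ∀ k, (∀ x y : Fin k → Fin N, 0 ≤ Zdist N β k x y) ∧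
      (∀ x y : Fin k → Fin N, Zdist N β k x y ≤ N) := by
  have hβ0 : 0 < β := by linarith
  have hN0 : (2 : ℝ) ≤ N := by exact_mod_cast by omega
  intro k
  induction k with
  | zero =>
    constructor
    · intro x y; exact le_refl 0 |>.trans (by rfl)
    · intro x y; show (0:ℝ) ≤ N; positivity
  | succ k ih =>
    obtain ⟨ihpos, ihbd⟩ := ih
    have hne : Nonempty (Fin k → Fin N) := ⟨fun _ => ⟨0, by omega⟩⟩
    obtain ⟨x0⟩ := hne
    have hbdd : BddAbove {d : ℝ | ∃ x y : Fin k → Fin N, d = Zdist N β k x y} :=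
      ⟨N, by rintro d ⟨x, y, rfl⟩; exact ihbd x y⟩
    have hS0 : 0 ≤ Zsup N β k :=
      (le_csSup hbdd ⟨x0, x0, rfl⟩ : (Zdist N β k x0 x0 ≤ Zsup N β k)).trans_eq' (Zdist_self N β k x0)
    have hSbd : Zsup N β k ≤ N := csSup_le ⟨_, ⟨x0, x0, rfl⟩⟩ (by rintro d ⟨x, y, rfl⟩; exact ihbd x y)
    have key : ∀ f g : Fin (k+1) → Fin N, Zdist N β (k+1) f g =
        (if f 0 = g 0 then (1 / (β * (Zsup N β k / sInf {d : ℝ | ∃ i j : Fin N, i ≠ j ∧ d = cycleDist N i j}))) * Zdist N β k (fun i => f i.succ) (fun i => g i.succ)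
        else cycleDist N (f 0) (g 0)) := by
      intro f g; rfl
    constructor
    · intro f g
      rw [key]
      split
      · have : 0 ≤ Zsup N β k / sInf {d : ℝ | ∃ i j : Fin N, i ≠ j ∧ d = cycleDist N i j} := by
          rw [sInf_cycle hN]; positivity
        have := ihpos (fun i => f i.succ) (fun i => g i.succ)
        positivity
      · exact cycleDist_nonneg N (f 0) (g 0)
    · intro f g
      rw [key]
      split
      · rw [sInf_cycle hN, div_one]
        rcases eq_or_lt_of_le hS0 with hS | hS
        · have h1 : Zdist N β k (fun i => f i.succ) (fun i => g i.succ) ≤ Zsup N β k :=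
            le_csSup hbdd ⟨_, _, rfl⟩
          have h2 := ihpos (fun i => f i.succ) (fun i => g i.succ)
          have hz : Zdist N β k (fun i => f i.succ) (fun i => g i.succ) = 0 := by linarith
          rw [hz, mul_zero]; positivity
        · have h1 : Zdist N β k (fun i => f i.succ) (fun i => g i.succ) ≤ Zsup N β k :=
            le_csSup hbdd ⟨_, _, rfl⟩
          have h2 := ihpos (fun i => f i.succ) (fun i => g i.succ)
          have hc : 0 < β * Zsup N β k := by positivity
          calc (1 / (β * Zsup N β k)) * Zdist N β k (fun i => f i.succ) (fun i => g i.succ)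
              ≤ (1 / (β * Zsup N β k)) * Zsup N β k := by
                apply mul_le_mul_of_nonneg_left h1; positivity
            _ = 1 / β := by field_simp
            _ ≤ 2 := by rw [div_le_iff₀ hβ0]; linarith
            _ ≤ N := hN0
      · exact cycleDist_le_N N (f 0) (g 0)

lemma Zdist_succ_eq {N : ℕ} (hN : 3 ≤ N) (β : ℝ) {k : ℕ} {f g : Fin (k+1) → Fin N}
    (h : f 0 = g 0) : Zdist N β (k+1) f g =
      (1 / (β * Zsup N β k)) * Zdist N β k (fun i => f i.succ) (fun i => g i.succ) := by
  show (if f 0 = g 0 then _ else _) = _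
  rw [if_pos h, sInf_cycle hN]
  norm_num [Zsup]

lemma Zdist_succ_ne {N : ℕ} (β : ℝ) {k : ℕ} {f g : Fin (k+1) → Fin N}
    (h : f 0 ≠ g 0) : Zdist N β (k+1) f g = cycleDist N (f 0) (g 0) := by
  show (if f 0 = g 0 then _ else _) = _
  rw [if_neg h]

lemma one_le_Zsup {N : ℕ} (hN : 3 ≤ N) {β : ℝ} (hβ : 1 / 2 ≤ β) {k : ℕ} (hk : 1 ≤ k) :
    1 ≤ Zsup N β k := by
  obtain ⟨m, rfl⟩ : ∃ m, k = m + 1 := ⟨k - 1, by omega⟩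
  obtain ⟨_, ihbd⟩ := Zdist_props hN hβ (m + 1)
  have hbdd : BddAbove {d : ℝ | ∃ x y : Fin (m+1) → Fin N, d = Zdist N β (m+1) x y} :=
    ⟨N, by rintro d ⟨x, y, rfl⟩; exact ihbd x y⟩
  set x : Fin (m+1) → Fin N := fun _ => ⟨0, by omega⟩ with hx
  set y : Fin (m+1) → Fin N := fun _ => ⟨1, by omega⟩ with hy
  have hxy : x 0 ≠ y 0 := by simp [hx, hy, Fin.ext_iff]
  have hval : Zdist N β (m+1) x y = cycleDist N (x 0) (y 0) := Zdist_succ_ne β hxy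
  have h1 : 1 ≤ Zdist N β (m+1) x y := hval ▸ one_le_cycleDist hxy
  exact h1.trans (le_csSup hbdd ⟨x, y, rfl⟩)

lemma fromTree (N : ℕ) (hN : 3 ≤ N)
    (hcycle : ∀ (α' : ℝ) (ρ : Fin N → Fin N → ℝ), 1 ≤ α' → IsTreeMetric ρ →
      (∀ i j : Fin N, cycleDist N i j ≤ ρ i j ∧ ρ i j ≤ α' * cycleDist N i j) →
      (N : ℝ) / 3 - 1 ≤ α')
    (k : ℕ) (β : ℝ) (α : ℝ) (hα : 1 ≤ α)
    (T0 : (Fin (k+1) → Fin N) → (Fin (k+1) → Fin N) → ℝ)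
    (htree : IsTreeMetric T0)
    (hdom : ∀ x y, Zdist N β (k+1) x y ≤ T0 x y)
    (x : Fin N → (Fin (k+1) → Fin N))
    (hx : ∀ u, x u 0 = u)
    (hhome : ∀ u y, T0 (x u) y ≤ α * Zdist N β (k+1) (x u) y) :
    (N : ℝ) / 3 - 1 ≤ α := by
  obtain ⟨hrefl, hsymm, hpos, htri, h4pt⟩ := htree
  set ρ : Fin N → Fin N → ℝ := fun u v => T0 (x u) (x v) with hρ
  apply hcycle α ρ hα
  · exact ⟨fun u => hrefl _, fun u v => hsymm _ _,
      fun u v huv => hpos _ _ (fun h => huv (by rw [← hx u, ← hx v, h])),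
      fun u v w => htri _ _ _, fun u v w z => h4pt _ _ _ _⟩
  · intro u v
    rcases eq_or_ne u v with rfl | huv
    · rw [cycleDist_self]
      constructor
      · rw [hρ]; simp [hrefl]
      · rw [hρ]; simp [hrefl]
    · have hne : x u 0 ≠ x v 0 := by rw [hx u, hx v]; exact huv
      have hval : Zdist N β (k+1) (x u) (x v) = cycleDist N u v := by
        rw [Zdist_succ_ne β hne, hx u, hx v]
      constructor
      · rw [← hval]; exact hdom _ _
      · rw [← hval]; exact hhome u (x v)

lemma main_ind (N : ℕ) (hN : 3 ≤ N)
    (hcycle : ∀ (α' : ℝ) (ρ : Fin N → Fin N → ℝ), 1 ≤ α' → IsTreeMetric ρ →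
      (∀ i j : Fin N, cycleDist N i j ≤ ρ i j ∧ ρ i j ≤ α' * cycleDist N i j) →
      (N : ℝ) / 3 - 1 ≤ α')
    (β : ℝ) (hβ : 1 / 2 ≤ β) :
    ∀ k, 1 ≤ k → ∀ α : ℝ, 1 ≤ α →
      ∀ T : Fin k → (Fin k → Fin N) → (Fin k → Fin N) → ℝ,
      (∀ i, IsTreeMetric (T i)) →
      (∀ i (x y : Fin k → Fin N), Zdist N β k x y ≤ T i x y) →
      (∀ x : Fin k → Fin N, ∃ i, ∀ y, T i x y ≤ α * Zdist N β k x y) →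
      (N : ℝ) / 3 - 1 ≤ α := by
  have hβ0 : 0 < β := by linarith
  intro k hk
  induction k, hk using Nat.le_induction with
  | base =>
    intro α hα T htree hdom hhome
    apply fromTree N hN hcycle 0 β α hα (T 0) (htree 0) (hdom 0)
      (fun u => fun _ => u) (fun u => rfl)
    intro u y
    obtain ⟨i, hi⟩ := hhome (fun _ => u)
    have : i = 0 := Subsingleton.elim _ _
    exact this ▸ hi y
  | succ k hk ih =>
    intro α hα T htree hdom hhome
    choose c hc using hhome
    by_cases H : ∀ u : Fin N, ∃ t : Fin k → Fin N, c (Fin.cons u t) = 0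
    · -- every copy contains a point with home tree 0
      choose t ht using H
      apply fromTree N hN hcycle k β α hα (T 0) (htree 0) (hdom 0)
        (fun u => Fin.cons u (t u)) (fun u => by simp)
      intro u y
      have := hc (Fin.cons u (t u))
      rw [ht u] at this
      exact this y
    · -- some copy misses color 0
      push_neg at H
      obtain ⟨u, hu⟩ := H
      have hS : 1 ≤ Zsup N β k := one_le_Zsup hN hβ hk
      set C : ℝ := β * Zsup N β k with hC
      have hC0 : 0 < C := by rw [hC]; positivity
      have hscale : ∀ t t' : Fin k → Fin N,
          Zdist N β k t t' = C * Zdist N β (k+1) (Fin.cons u t) (Fin.cons u t') := by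
        intro t t'
        have h00 : (Fin.cons u t : Fin (k+1) → Fin N) 0 = (Fin.cons u t' : Fin (k+1) → Fin N) 0 := by
          simp
        rw [Zdist_succ_eq hN β h00]
        have e1 : (fun i : Fin k => (Fin.cons u t : Fin (k+1) → Fin N) i.succ) = t := by
          funext i; simp
        have e2 : (fun i : Fin k => (Fin.cons u t' : Fin (k+1) → Fin N) i.succ) = t' := by
          funext i; simp
        rw [e1, e2, ← hC]
        field_simp
      set T' : Fin k → (Fin k → Fin N) → (Fin k → Fin N) → ℝ :=
        fun i t t' => C * T i.succ (Fin.cons u t) (Fin.cons u t') with hT'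
      apply ih α hα T'
      · intro i
        obtain ⟨hrefl, hsymm, hpos, htri, h4pt⟩ := htree i.succ
        refine ⟨fun t => ?_, fun t t' => ?_, fun t t' htt => ?_, fun a b d => ?_,
          fun a b d e => ?_⟩
        · show C * T i.succ (Fin.cons u t) (Fin.cons u t) = 0
          rw [hrefl, mul_zero]
        · show C * T i.succ (Fin.cons u t) (Fin.cons u t') =
            C * T i.succ (Fin.cons u t') (Fin.cons u t)
          rw [hsymm]
        · apply mul_pos hC0
          apply hpos
          intro hcons
          apply htt
          funext j
          exact congrFun (by simpa using congrArg (fun f => fun i : Fin k => f i.succ) hcons) j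
        · have := htri (Fin.cons u a) (Fin.cons u b) (Fin.cons u d)
          show C * _ ≤ C * _ + C * _
          nlinarith
        · have h := h4pt (Fin.cons u a) (Fin.cons u b) (Fin.cons u d) (Fin.cons u e)
          show C * _ + C * _ ≤ max (C * _ + C * _) (C * _ + C * _)
          rcases le_total (T i.succ (Fin.cons u a) (Fin.cons u d) +
              T i.succ (Fin.cons u b) (Fin.cons u e))
              (T i.succ (Fin.cons u a) (Fin.cons u e) +
              T i.succ (Fin.cons u b) (Fin.cons u d)) with hle | hle
          · apply le_max_of_le_right
            rcases le_max_iff.mp h with h' | h' <;> nlinarith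
          · apply le_max_of_le_left
            rcases le_max_iff.mp h with h' | h' <;> nlinarith
      · intro i t t'
        rw [hscale t t']
        exact mul_le_mul_of_nonneg_left (hdom _ _ _) hC0.le
      · intro t
        have hne : c (Fin.cons u t) ≠ 0 := hu t
        refine ⟨(c (Fin.cons u t)).pred hne, fun y => ?_⟩
        show C * T ((c (Fin.cons u t)).pred hne).succ (Fin.cons u t) (Fin.cons u y) ≤ _
        rw [Fin.succ_pred]
        calc C * T (c (Fin.cons u t)) (Fin.cons u t) (Fin.cons u y)
            ≤ C * (α * Zdist N β (k+1) (Fin.cons u t) (Fin.cons u y)) :=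
              mul_le_mul_of_nonneg_left (hc _ _) hC0.le
          _ = α * Zdist N β k t y := by rw [hscale t y]; ring

/-- Lower bound for Ramsey tree covers of composed cycles: if every
(dominating) embedding of `C_N` into a tree metric requires distortion at least
`N/3 − 1`, then for every `k ≥ 1` and `β ≥ 1/2`, any Ramsey tree cover of
`Z_k(N) = [C_N]_β^k` with `k` trees has distortion at least
`N/3 − 1 = (1/3)·|Z_k(N)|^{1/k} − 1`. -/
theorem stmt_12 (N : ℕ) (hN : 3 ≤ N)
    (hcycle : ∀ (α' : ℝ) (ρ : Fin N → Fin N → ℝ), 1 ≤ α' → IsTreeMetric ρ →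
      (∀ i j : Fin N, cycleDist N i j ≤ ρ i j ∧ ρ i j ≤ α' * cycleDist N i j) →
      (N : ℝ) / 3 - 1 ≤ α')
    (k : ℕ) (hk : 1 ≤ k) (β : ℝ) (hβ : 1 / 2 ≤ β) (α : ℝ) (hα : 1 ≤ α)
    (T : Fin k → (Fin k → Fin N) → (Fin k → Fin N) → ℝ)
    (htree : ∀ i, IsTreeMetric (T i))
    (hdom : ∀ i (x y : Fin k → Fin N), Zdist N β k x y ≤ T i x y)
    (hhome : ∀ x : Fin k → Fin N, ∃ i, ∀ y, T i x y ≤ α * Zdist N β k x y) :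
    (N : ℝ) / 3 - 1 ≤ α :=
  main_ind N hN hcycle β hβ k hk α hα T htree hdom hhome
end

section
/- Diameter growth bound for bottom-up clustering: let 0 < ε < 1/8 and define a sequence where a cluster formed at level i has diameter D_i satisfying D_i ≤ 2·((3/ε)·2^i + D') where D' is the maximum diameter of clusters formed at levels i' ≤ i − log₂(1/ε). Then by induction D_i ≤ (8/ε)·2^i for all levels i, since D' ≤ (8/ε)·2^{i−log₂(1/ε)} = 8·2^i and 2·((3/ε)·2^i + 8·2^i) ≤ (8/ε)·2^i when ε < 1/8. -/
/-- Diameter growth bound for bottom-up clustering: if `ε = 2^{-L} < 1/8` and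
`f : ℤ → ℝ` (diameters by level) is nonnegative, vanishes below some minimum
scale, and satisfies `f(i) ≤ 2·((3/ε)·2^i + sup_{i' ≤ i − L} f(i'))`, then
`f(i) ≤ (8/ε)·2^i` for every level `i`. -/
theorem stmt_15 (ε : ℝ) (L : ℕ) (hεL : ε = (2 : ℝ) ^ (-(L : ℤ)))
    (hε0 : 0 < ε) (hε8 : ε < 1 / 8)
    (f : ℤ → ℝ) (hf0 : ∀ i, 0 ≤ f i)
    (hbdd : ∀ i : ℤ, BddAbove (f '' {i' | i' ≤ i}))
    (i₀ : ℤ) (hbase : ∀ i ≤ i₀, f i = 0)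
    (hrec : ∀ i : ℤ, f i ≤ 2 * ((3 / ε) * (2 : ℝ) ^ i + sSup (f '' {i' | i' ≤ i - L}))) :
    ∀ i : ℤ, f i ≤ (8 / ε) * (2 : ℝ) ^ i := by
  have h2 : (0:ℝ) < 2 := by norm_num
  have hL1 : (1:ℤ) ≤ (L:ℤ) := by
    rcases Nat.eq_zero_or_pos L with h | h
    · subst h; norm_num at hεL; rw [hεL] at hε8; norm_num at hε8
    · exact_mod_cast h
  have hbound : ∀ i : ℤ, 0 ≤ (8 / ε) * (2 : ℝ) ^ i := by
    intro i
    positivity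
  have key : ∀ n : ℕ, ∀ i : ℤ, i ≤ i₀ + n → f i ≤ (8 / ε) * (2 : ℝ) ^ i := by
    intro n
    induction n with
    | zero =>
      intro i hi
      rw [hbase i (by simpa using hi)]
      exact hbound i
    | succ n IH =>
      intro i hi
      by_cases hle : i ≤ i₀
      · rw [hbase i hle]; exact hbound i
      push_neg at hle
      have hsup : sSup (f '' {i' | i' ≤ i - L}) ≤ (8 / ε) * (2 : ℝ) ^ (i - (L:ℤ)) := by
        apply csSup_le
        · exact ⟨f (i - L), Set.mem_image_of_mem f (by simp)⟩
        · rintro y ⟨i', hi', rfl⟩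
          have h1 : i' ≤ i₀ + n := by
            have : i' ≤ i - L := hi'
            omega
          calc f i' ≤ (8 / ε) * (2 : ℝ) ^ i' := IH i' h1
            _ ≤ (8 / ε) * (2 : ℝ) ^ (i - (L:ℤ)) := by
                apply mul_le_mul_of_nonneg_left _ (by positivity)
                exact zpow_le_zpow_right₀ (by norm_num) hi'
      have heq : (8 / ε) * (2 : ℝ) ^ (i - (L:ℤ)) = 8 * (2 : ℝ) ^ i := by
        rw [hεL, zpow_sub₀ (by norm_num : (2:ℝ) ≠ 0), zpow_neg]
        field_simp
      have hA : (0:ℝ) < (2:ℝ) ^ i := by positivity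
      have := hrec i
      rw [heq] at hsup
      have hstep : f i ≤ 2 * ((3 / ε) * (2 : ℝ) ^ i + 8 * (2 : ℝ) ^ i) := by
        linarith
      calc f i ≤ 2 * ((3 / ε) * (2 : ℝ) ^ i + 8 * (2 : ℝ) ^ i) := hstep
        _ ≤ (8 / ε) * (2 : ℝ) ^ i := by
            have h : 16 * (2:ℝ) ^ i ≤ (2 / ε) * (2:ℝ) ^ i := by
              rw [div_mul_eq_mul_div, le_div_iff₀ hε0]
              nlinarith
            have e1 : (8 / ε) * (2:ℝ) ^ i = (6 / ε) * (2:ℝ) ^ i + (2 / ε) * (2:ℝ) ^ i := by ring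
            have e2 : 2 * ((3 / ε) * (2:ℝ) ^ i + 8 * (2:ℝ) ^ i) = (6 / ε) * (2:ℝ) ^ i + 16 * (2:ℝ) ^ i := by ring
            linarith
  intro i
  exact key (i - i₀).toNat i (by omega)
end

section
/- Tree cover distortion from near-additive cluster paths: Let (X,d) be a metric space, 0 < ε < 1/8, and x,u,v ∈ X with d(x,u) ≤ 2^i, (1/ε)·2^{i−1} ≤ d(u,v) < (1/ε)·2^i. Suppose a tree T containing x,u,v satisfies d_T(x,w) ≤ d(x,w) + 2^{i+4} for every w ∈ B(x, (2/ε)·2^i). Then d_T(u,v) ≤ d_T(u,x) + d_T(x,v) ≤ (1 + c·ε)·d(u,v) for an absolute constant c (e.g. c = 70 suffices). -/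
/-- Tree cover distortion from near-additive cluster paths: if `d(x,u) ≤ 2^i`,
`(1/ε)·2^{i-1} ≤ d(u,v) < (1/ε)·2^i`, and the tree metric `d_T` satisfies
`d_T(x,w) ≤ d(x,w) + 2^{i+4}` for every `w` in the ball `B(x,(2/ε)·2^i)`, then
`d_T(u,v) ≤ d_T(u,x) + d_T(x,v) ≤ (1 + 70ε)·d(u,v)`. -/
theorem stmt_16 {X : Type*} [MetricSpace X] (ε : ℝ) (hε0 : 0 < ε) (hε8 : ε < 1 / 8)
    (i : ℕ) (x u v : X) (dT : X → X → ℝ)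
    (hsymm : ∀ a b, dT a b = dT b a)
    (htri : ∀ a b c, dT a c ≤ dT a b + dT b c)
    (hxu : dist x u ≤ 2 ^ i)
    (hlo : (1 / ε) * 2 ^ i / 2 ≤ dist u v)
    (hhi : dist u v < (1 / ε) * 2 ^ i)
    (hnear : ∀ w : X, dist x w ≤ (2 / ε) * 2 ^ i → dT x w ≤ dist x w + 2 ^ (i + 4)) :
    dT u v ≤ dT u x + dT x v ∧ dT u x + dT x v ≤ (1 + 70 * ε) * dist u v := by
  have hp : (0:ℝ) < 2 ^ i := by positivity
  have hε1 : (1:ℝ) ≤ 1 / ε := by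
    rw [le_div_iff₀ hε0]; linarith
  have he : (1:ℝ)/ε * ε = 1 := by field_simp
  have h3 : (2:ℝ)^i ≤ (1/ε) * 2^i := le_mul_of_one_le_left hp.le hε1
  have hdd : (2:ℝ)/ε * 2^i = 2 * ((1/ε) * 2^i) := by ring
  have h1 : dist x u ≤ (2 / ε) * 2 ^ i := by linarith
  have hxv : dist x v ≤ dist x u + dist u v := dist_triangle x u v
  have h2 : dist x v ≤ (2 / ε) * 2 ^ i := by linarith
  have hTxu := hnear u h1
  have hTxv := hnear v h2
  have hε2 : (2:ℝ)^i ≤ 2 * ε * dist u v := by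
    have h := mul_le_mul_of_nonneg_left hlo hε0.le
    have h4 : ε * ((1 / ε) * 2 ^ i / 2) = 2^i / 2 := by field_simp
    nlinarith
  refine ⟨htri u x v, ?_⟩
  have hs : dT u x = dT x u := hsymm u x
  have hpow : (2:ℝ) ^ (i + 4) = 16 * 2 ^ i := by rw [pow_add]; ring
  have hb : dT u x + dT x v ≤ dist u v + 34 * 2 ^ i := by
    rw [hs]; rw [hpow] at hTxu hTxv; linarith
  nlinarith [dist_nonneg (x:=u) (y:=v)]
end
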